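/- Let b ≥ 2 and m ≥ 2 be integers and set c := b^m. Then for every real x > 0 there exists a unique integer r with 0 ≤ r ≤ m − 1 such that S_c(x) = S_b(x) · b^r; moreover S_b(S_c(x)) = S_b(x). -/
import Mathlib


open MeasureTheory

/-- For `c = b^m`, every `x > 0` satisfies `S_c(x) = S_b(x) · b^r` for a unique
integer `0 ≤ r ≤ m − 1`, and moreover `S_b(S_c(x)) = S_b(x)`.
Here `S_b x = b ^ ⟨log_b x⟩` is the base-`b` significand. -/
theorem significand_pow_base
    (b m : ℕ) (hb : 2 ≤ b) (hm : 2 ≤ m) :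
    ∀ x : ℝ, 0 < x →
      (∃! r : ℤ, 0 ≤ r ∧ r ≤ (m : ℤ) - 1 ∧
        ((b ^ m : ℕ) : ℝ) ^ Int.fract (Real.logb (b ^ m : ℕ) x)
          = (b : ℝ) ^ Int.fract (Real.logb b x) * (b : ℝ) ^ r) ∧
      (b : ℝ) ^ Int.fract (Real.logb b
          (((b ^ m : ℕ) : ℝ) ^ Int.fract (Real.logb (b ^ m : ℕ) x)))
        = (b : ℝ) ^ Int.fract (Real.logb b x) := by
  intro x hx
  have hb1 : (1 : ℝ) < (b : ℝ) := by exact_mod_cast lt_of_lt_of_le one_lt_two hb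
  have hb0 : (0 : ℝ) < (b : ℝ) := lt_trans one_pos hb1
  have hbne1 : (b : ℝ) ≠ 1 := ne_of_gt hb1
  have hm0 : (0 : ℝ) < (m : ℝ) := by exact_mod_cast lt_of_lt_of_le two_pos hm
  have hmne : (m : ℝ) ≠ 0 := ne_of_gt hm0
  set L := Real.logb b x with hL
  -- c = b^m
  have hc : ((b ^ m : ℕ) : ℝ) = (b : ℝ) ^ (m : ℕ) := by push_cast; ring
  have hlogc : Real.logb ((b ^ m : ℕ) : ℝ) x = L / m := by
    rw [hc, hL, Real.logb, Real.logb, Real.log_pow]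
    rw [div_div]
    congr 1
    ring
  -- key: S_c(x) = b ^ (L - m * ⌊L/m⌋)  (rpow)
  have key : ((b ^ m : ℕ) : ℝ) ^ Int.fract (Real.logb ((b ^ m : ℕ) : ℝ) x)
      = (b : ℝ) ^ (L - (m : ℝ) * (⌊L / (m : ℝ)⌋ : ℝ)) := by
    rw [hlogc, hc, ← Real.rpow_natCast (b : ℝ) m, ← Real.rpow_mul hb0.le]
    congr 1
    rw [Int.fract]
    field_simp
  set q : ℤ := ⌊L / (m : ℝ)⌋ with hq
  set r : ℤ := ⌊L⌋ - (m : ℤ) * q with hr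
  -- bounds
  have h1 : (m : ℝ) * (q : ℝ) ≤ L := by
    have := Int.floor_le (L / (m : ℝ))
    calc (m : ℝ) * (q : ℝ) ≤ (m : ℝ) * (L / m) := by
          exact mul_le_mul_of_nonneg_left this hm0.le
      _ = L := by field_simp
  have h2 : L < (m : ℝ) * (q : ℝ) + m := by
    have := Int.lt_floor_add_one (L / (m : ℝ))
    have := (div_lt_iff₀ hm0).mp this
    calc L < ((q : ℝ) + 1) * m := this
      _ = (m : ℝ) * (q : ℝ) + m := by ring
  have hr0 : 0 ≤ r := by
    have : ((m : ℤ) * q : ℤ) ≤ ⌊L⌋ := by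
      apply Int.le_floor.mpr
      push_cast
      exact h1
    omega
  have hr1 : r ≤ (m : ℤ) - 1 := by
    have : ⌊L⌋ < (m : ℤ) * q + m := by
      apply Int.floor_lt.mpr
      push_cast
      exact h2
    omega
  -- the equation
  have heq : ((b ^ m : ℕ) : ℝ) ^ Int.fract (Real.logb ((b ^ m : ℕ) : ℝ) x)
      = (b : ℝ) ^ Int.fract L * (b : ℝ) ^ r := by
    rw [key, ← Real.rpow_intCast (b : ℝ) r, ← Real.rpow_add hb0]
    congr 1
    rw [Int.fract, hr]
    push_cast
    ring
  constructor
  · refine ⟨r, ⟨hr0, hr1, heq⟩, ?_⟩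
    intro r' ⟨_, _, heq'⟩
    have hpow : (b : ℝ) ^ r' = (b : ℝ) ^ r := by
      have hne : (b : ℝ) ^ Int.fract L ≠ 0 := ne_of_gt (Real.rpow_pos_of_pos hb0 _)
      have := heq'.symm.trans heq
      exact mul_left_cancel₀ hne this
    exact zpow_right_injective₀ hb0 hbne1 hpow
  · rw [key, Real.logb_rpow hb0 hbne1]
    have : L - (m : ℝ) * (q : ℝ) = L - (((m : ℤ) * q : ℤ) : ℝ) := by push_cast; ring
    rw [this, Int.fract_sub_intCast]
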